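/- Let θ_1, …, θ_n ∈ ℝ satisfy TV(θ_{1:n}) = Σ_{t=2}^n |θ_t − θ_{t−1}| ≤ C, let σ > 0, and suppose {1, …, n} is partitioned into M consecutive intervals [1_s, 1_t], …, [M_s, M_t] (with i_s = (i−1)_t + 1) of lengths n_i = i_t − i_s + 1 such that for every i, Σ_{t=i_s+1}^{i_t} |θ_t − θ_{t−1}| ≤ σ/√(n_i), and for every i < M, Σ_{t=i_s+1}^{i_t+1} |θ_t − θ_{t−1}| > σ/√(n_i + 1). Then M ≤ max( 1, 4^{2/3}·n^{1/3}·C^{2/3}·σ^{−2/3} ). -/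

import Mathlib

open Finset in
lemma aux_cs (K : ℕ) (a : ℕ → ℝ) (hK : 0 < K) (ha : ∀ i ∈ Finset.range K, 0 < a i) :
    (K : ℝ) ^ ((3:ℝ)/2) / Real.sqrt (∑ i ∈ Finset.range K, a i) ≤
      ∑ i ∈ Finset.range K, 1 / Real.sqrt (a i) := by
  set S := ∑ i ∈ Finset.range K, 1 / Real.sqrt (a i) with hS
  set T := ∑ i ∈ Finset.range K, Real.sqrt (a i) with hT
  set A := ∑ i ∈ Finset.range K, a i with hA
  have hne : (Finset.range K).Nonempty := by simp [Finset.nonempty_range_iff]; omega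
  have hApos : 0 < A := Finset.sum_pos ha hne
  have hTpos : 0 < T := Finset.sum_pos (fun i hi => Real.sqrt_pos.2 (ha i hi)) hne
  have hSpos : 0 < S := Finset.sum_pos
    (fun i hi => one_div_pos.2 (Real.sqrt_pos.2 (ha i hi))) hne
  have hKpos : (0:ℝ) < K := by exact_mod_cast hK
  have cs1 : (K : ℝ) ^ 2 ≤ T * S := by
    have h := Finset.sum_mul_sq_le_sq_mul_sq (Finset.range K)
      (fun i => Real.sqrt (Real.sqrt (a i))) (fun i => 1 / Real.sqrt (Real.sqrt (a i)))
    have h1 : ∑ i ∈ Finset.range K,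
        Real.sqrt (Real.sqrt (a i)) * (1 / Real.sqrt (Real.sqrt (a i))) = (K : ℝ) := by
      rw [Finset.sum_congr rfl (fun i hi => ?_), Finset.sum_const, Finset.card_range,
        nsmul_eq_mul, mul_one]
      have : Real.sqrt (Real.sqrt (a i)) ≠ 0 := by
        have := ha i hi; positivity
      field_simp
    have h2 : ∑ i ∈ Finset.range K, Real.sqrt (Real.sqrt (a i)) ^ 2 = T := by
      refine Finset.sum_congr rfl fun i hi => ?_
      exact Real.sq_sqrt (Real.sqrt_nonneg _)
    have h3 : ∑ i ∈ Finset.range K, (1 / Real.sqrt (Real.sqrt (a i))) ^ 2 = S := by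
      refine Finset.sum_congr rfl fun i hi => ?_
      rw [div_pow, one_pow, Real.sq_sqrt (Real.sqrt_nonneg _)]
    rw [h1, h2, h3] at h
    exact h
  have cs2 : T ≤ Real.sqrt K * Real.sqrt A := by
    have h := Finset.sum_mul_sq_le_sq_mul_sq (Finset.range K)
      (fun i => (1:ℝ)) (fun i => Real.sqrt (a i))
    have h2 : ∑ i ∈ Finset.range K, Real.sqrt (a i) ^ 2 = A := by
      refine Finset.sum_congr rfl fun i hi => ?_
      exact Real.sq_sqrt (ha i hi).le
    simp only [one_mul, one_pow, Finset.sum_const, Finset.card_range, nsmul_eq_mul,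
      mul_one] at h
    rw [h2, ← hT] at h
    calc T = Real.sqrt (T ^ 2) := (Real.sqrt_sq hTpos.le).symm
    _ ≤ Real.sqrt ((K : ℝ) * A) := Real.sqrt_le_sqrt h
    _ = Real.sqrt K * Real.sqrt A := Real.sqrt_mul (Nat.cast_nonneg K) A
  have hKA : 0 < Real.sqrt (K : ℝ) * Real.sqrt A := by positivity
  have step1 : (K : ℝ) ^ 2 / (Real.sqrt K * Real.sqrt A) ≤ S := by
    rw [div_le_iff₀ hKA]
    calc (K:ℝ)^2 ≤ T * S := cs1
    _ ≤ (Real.sqrt K * Real.sqrt A) * S := by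
      exact mul_le_mul_of_nonneg_right cs2 hSpos.le
    _ = S * (Real.sqrt K * Real.sqrt A) := by ring
  refine le_trans (le_of_eq ?_) step1
  rw [div_mul_eq_div_div, eq_comm, div_eq_div_iff (by positivity) (by positivity)]
  rw [← Real.rpow_natCast (K:ℝ) 2, Real.sqrt_eq_rpow, ← Real.rpow_sub hKpos]
  norm_num

theorem stmt_14 (n : ℕ) (θ : ℕ → ℝ) (C σ : ℝ) (hσ : 0 < σ)
    (hTV : ∑ t ∈ Finset.Icc 2 n, |θ t - θ (t - 1)| ≤ C)
    (M : ℕ) (hM : 0 < M) (b : ℕ → ℕ)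
    (hb0 : b 0 = 0) (hbM : b M = n)
    (hmono : ∀ i < M, b i < b (i + 1))
    (hbin : ∀ i < M,
      ∑ t ∈ Finset.Icc (b i + 2) (b (i + 1)), |θ t - θ (t - 1)| ≤
        σ / Real.sqrt ((b (i + 1) : ℝ) - b i))
    (hbin2 : ∀ i, i + 1 < M →
      σ / Real.sqrt (((b (i + 1) : ℝ) - b i) + 1) <
        ∑ t ∈ Finset.Icc (b i + 2) (b (i + 1) + 1), |θ t - θ (t - 1)|) :
    (M : ℝ) ≤ max 1
      ((4 : ℝ) ^ ((2 : ℝ) / 3) * (n : ℝ) ^ ((1 : ℝ) / 3) * C ^ ((2 : ℝ) / 3) *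
        σ ^ (-(2 : ℝ) / 3)) := by
  rcases eq_or_lt_of_le (Nat.one_le_iff_ne_zero.mpr hM.ne') with h1 | hM2
  · rw [← h1]; exact le_trans (by norm_num) (le_max_left _ _)
  -- M ≥ 2
  have hC : 0 ≤ C := le_trans (Finset.sum_nonneg fun t _ => abs_nonneg _) hTV
  set K := M - 1 with hK
  have hMK : M = K + 1 := by omega
  have hK1 : 1 ≤ K := by omega
  -- monotonicity
  have key : ∀ d i, i + d ≤ M → b i ≤ b (i + d) := by
    intro d
    induction d with
    | zero => intro i _; simp
    | succ d ih =>
      intro i h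
      have h1 := ih i (by omega)
      have h2 := hmono (i + d) (by omega)
      rw [show i + (d + 1) = (i + d) + 1 by omega]
      omega
  have hmono' : ∀ i j, i ≤ j → j ≤ M → b i ≤ b j := by
    intro i j hij hjM
    have h := key (j - i) i (by omega)
    rwa [show i + (j - i) = j by omega] at h
  have blow : ∀ i, i ≤ M → i ≤ b i := by
    intro i
    induction i with
    | zero => omega
    | succ i ih =>
      intro h
      have := hmono i (by omega)
      have := ih (by omega)
      omega
  have hbKn : b K < n := by
    have := hmono K (by omega)
    have : b (K + 1) = n := by rw [← hMK, hbM]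
    omega
  have hKn : K ≤ n := le_trans (blow K (by omega)) hbKn.le
  set a : ℕ → ℝ := fun i => ((b (i + 1) : ℝ) - b i) + 1 with ha_def
  have ha : ∀ i ∈ Finset.range K, 0 < a i := by
    intro i hi
    simp only [Finset.mem_range] at hi
    have h := hmono i (by omega)
    have : (b i : ℝ) ≤ b (i + 1) := by exact_mod_cast h.le
    simp only [ha_def]; linarith
  have hA_le : ∑ i ∈ Finset.range K, a i ≤ 2 * n := by
    have htel : ∑ i ∈ Finset.range K, ((b (i+1) : ℝ) - b i) = (b K : ℝ) - b 0 :=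
      Finset.sum_range_sub (fun i => (b i : ℝ)) K
    have : ∑ i ∈ Finset.range K, a i
        = ((b K : ℝ) - b 0) + K := by
      simp only [ha_def, Finset.sum_add_distrib, htel, Finset.sum_const,
        Finset.card_range, nsmul_eq_mul, mul_one]
    rw [this, hb0]
    have h1 : (b K : ℝ) ≤ n := by exact_mod_cast hbKn.le
    have h2 : (K : ℝ) ≤ n := by exact_mod_cast hKn
    push_cast
    linarith
  -- disjointness and TV bound
  have hsum_S : ∑ i ∈ Finset.range K,
      ∑ t ∈ Finset.Icc (b i + 2) (b (i + 1) + 1), |θ t - θ (t - 1)| ≤ C := by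
    have hd : ∀ i j : ℕ, i < j → j < K →
        Disjoint (Finset.Icc (b i + 2) (b (i + 1) + 1))
          (Finset.Icc (b j + 2) (b (j + 1) + 1)) := by
      intro i j hij hjK
      rw [Finset.disjoint_left]
      intro t ht1 ht2
      rw [Finset.mem_Icc] at ht1 ht2
      have : b (i + 1) ≤ b j := hmono' (i + 1) j (by omega) (by omega)
      omega
    have hdisj : (↑(Finset.range K) : Set ℕ).PairwiseDisjoint
        (fun i => Finset.Icc (b i + 2) (b (i + 1) + 1)) := by
      intro i hi j hj hij
      simp only [Finset.coe_range, Set.mem_Iio] at hi hj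
      rcases lt_trichotomy i j with h | h | h
      · exact hd i j h hj
      · exact absurd h hij
      · exact (hd j i h hi).symm
    rw [← Finset.sum_biUnion hdisj]
    refine le_trans (Finset.sum_le_sum_of_subset_of_nonneg ?_
      (fun t _ _ => abs_nonneg _)) hTV
    intro t ht
    rw [Finset.mem_biUnion] at ht
    obtain ⟨i, hi, ht⟩ := ht
    rw [Finset.mem_range] at hi
    rw [Finset.mem_Icc] at ht ⊢
    have : b (i + 1) ≤ b K := hmono' (i + 1) K (by omega) (by omega)
    omega
  -- combine
  have h2 : σ * ∑ i ∈ Finset.range K, 1 / Real.sqrt (a i) ≤ C := by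
    rw [Finset.mul_sum]
    refine le_trans (Finset.sum_le_sum fun i hi => ?_) hsum_S
    rw [Finset.mem_range] at hi
    rw [mul_one_div]
    exact (hbin2 i (by omega)).le
  have h3 := aux_cs K a hK1 ha
  have hsqA : Real.sqrt (∑ i ∈ Finset.range K, a i) ≤ Real.sqrt (2 * n) := by
    exact Real.sqrt_le_sqrt hA_le
  have hApos : 0 < ∑ i ∈ Finset.range K, a i :=
    Finset.sum_pos ha (by simp [Finset.nonempty_range_iff]; omega)
  have h4 : (K : ℝ) ^ ((3:ℝ)/2) / Real.sqrt (2 * n) ≤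
      ∑ i ∈ Finset.range K, 1 / Real.sqrt (a i) := by
    refine le_trans ?_ h3
    apply div_le_div_of_nonneg_left (by positivity) (Real.sqrt_pos.2 hApos) hsqA
  have h5 : σ * ((K : ℝ) ^ ((3:ℝ)/2) / Real.sqrt (2 * n)) ≤ C :=
    le_trans (mul_le_mul_of_nonneg_left h4 hσ.le) h2
  have hn1 : 1 ≤ n := by omega
  have hnpos : (0:ℝ) < n := by exact_mod_cast hn1
  have hsq2n : Real.sqrt (2 * n) = Real.sqrt 2 * Real.sqrt n := by
    rw [Real.sqrt_mul (by norm_num)]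
  have h6 : σ * (K : ℝ) ^ ((3:ℝ)/2) ≤ C * Real.sqrt (2 * n) := by
    rw [← div_le_iff₀ (by positivity)] at *
    calc σ * (K:ℝ)^((3:ℝ)/2) / Real.sqrt (2*n)
        = σ * ((K:ℝ)^((3:ℝ)/2) / Real.sqrt (2*n)) := by ring
    _ ≤ C := h5
  -- M ≤ 2K
  have hM2K : (M : ℝ) ≤ 2 * K := by
    have : M ≤ 2 * K := by omega
    exact_mod_cast this
  have hMrpow : (M : ℝ) ^ ((3:ℝ)/2) ≤ (2:ℝ)^((3:ℝ)/2) * (K : ℝ) ^ ((3:ℝ)/2) := by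
    rw [← Real.mul_rpow (by norm_num) (Nat.cast_nonneg K)]
    exact Real.rpow_le_rpow (Nat.cast_nonneg M) hM2K (by norm_num)
  have h7 : σ * (M : ℝ) ^ ((3:ℝ)/2) ≤ 4 * Real.sqrt n * C := by
    calc σ * (M : ℝ) ^ ((3:ℝ)/2)
        ≤ σ * ((2:ℝ)^((3:ℝ)/2) * (K : ℝ) ^ ((3:ℝ)/2)) :=
          mul_le_mul_of_nonneg_left hMrpow hσ.le
    _ = (2:ℝ)^((3:ℝ)/2) * (σ * (K : ℝ) ^ ((3:ℝ)/2)) := by ring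
    _ ≤ (2:ℝ)^((3:ℝ)/2) * (C * Real.sqrt (2 * n)) := by
          exact mul_le_mul_of_nonneg_left h6 (by positivity)
    _ = ((2:ℝ)^((3:ℝ)/2) * Real.sqrt 2) * Real.sqrt n * C := by
          rw [hsq2n]; ring
    _ = 4 * Real.sqrt n * C := by
          rw [Real.sqrt_eq_rpow, ← Real.rpow_add (by norm_num),
            show (3:ℝ)/2 + 1/2 = ((2:ℕ):ℝ) by norm_num, Real.rpow_natCast]
          norm_num
  have h8 : (M:ℝ)^((3:ℝ)/2) ≤ 4 * Real.sqrt n * C / σ := by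
    rw [le_div_iff₀ hσ]; linarith
  have h9 : (M:ℝ) ≤ (4 * Real.sqrt n * C / σ) ^ ((2:ℝ)/3) := by
    have h10 := Real.rpow_le_rpow (by positivity) h8 (by norm_num : (0:ℝ) ≤ 2/3)
    rwa [← Real.rpow_mul (Nat.cast_nonneg M),
      show (3:ℝ)/2 * (2/3) = 1 by norm_num, Real.rpow_one] at h10
  refine le_max_of_le_right (le_trans h9 (le_of_eq ?_))
  rw [div_eq_mul_inv,
    Real.mul_rpow (by positivity) (by positivity),
    Real.mul_rpow (by positivity) hC,
    Real.mul_rpow (by norm_num) (Real.sqrt_nonneg _),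
    Real.inv_rpow hσ.le, ← Real.rpow_neg hσ.le,
    Real.sqrt_eq_rpow, ← Real.rpow_mul hnpos.le]
  norm_num
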